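/- For the cycle C_n on n ≥ 3 vertices, L□_E(C_n)=2n+1. -/

import Mathlib

open SimpleGraph

/-- An `l`-track on `G`: a surjective function whose consecutive values are adjacent. -/
def IsTrack {V : Type*} (G : SimpleGraph V) {l : ℕ} (f : Fin l → V) : Prop :=
  Function.Surjective f ∧
    ∀ i : ℕ, ∀ hi : i + 1 < l, G.Adj (f ⟨i, Nat.lt_of_succ_lt hi⟩) (f ⟨i + 1, hi⟩)

/-- A lazy `l`-track on `G`: consecutive values are adjacent or equal. -/
def IsLazyTrack {V : Type*} (G : SimpleGraph V) {l : ℕ} (f : Fin l → V) : Prop :=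
  Function.Surjective f ∧
    ∀ i : ℕ, ∀ hi : i + 1 < l,
      G.Adj (f ⟨i, Nat.lt_of_succ_lt hi⟩) (f ⟨i + 1, hi⟩) ∨
        f ⟨i, Nat.lt_of_succ_lt hi⟩ = f ⟨i + 1, hi⟩

/-- The condition that every edge of `G` is traversed by `f`. -/
def SweepCond {V : Type*} (G : SimpleGraph V) {l : ℕ} (f : Fin l → V) : Prop :=
  ∀ e ∈ G.edgeSet, ∃ i : ℕ, ∃ hi : i + 1 < l,
    e = s(f ⟨i, Nat.lt_of_succ_lt hi⟩, f ⟨i + 1, hi⟩)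

/-- An `l`-sweep on `G`: an `l`-track traversing every edge. -/
def IsSweep {V : Type*} (G : SimpleGraph V) {l : ℕ} (f : Fin l → V) : Prop :=
  IsTrack G f ∧ SweepCond G f

/-- A lazy `l`-sweep on `G`: a lazy `l`-track traversing every edge. -/
def IsLazySweep {V : Type*} (G : SimpleGraph V) {l : ℕ} (f : Fin l → V) : Prop :=
  IsLazyTrack G f ∧ SweepCond G f

/-- `f` and `g` are opposite: at each step exactly `f` moves iff `g` stays. -/
def IsOpposite {V : Type*} (G : SimpleGraph V) {l : ℕ} (f g : Fin l → V) : Prop :=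
  ∀ i : ℕ, ∀ hi : i + 1 < l,
    (G.Adj (f ⟨i, Nat.lt_of_succ_lt hi⟩) (f ⟨i + 1, hi⟩) ↔
      g ⟨i, Nat.lt_of_succ_lt hi⟩ = g ⟨i + 1, hi⟩)

/-- The distance `m_G(f,g)`: minimal distance between simultaneous positions. -/
noncomputable def mDist {V : Type*} (G : SimpleGraph V) {l : ℕ} (f g : Fin l → V) : ℕ :=
  sInf {d | ∃ i : Fin l, G.dist (f i) (g i) = d}

/-- Strong vertex span `σ⊠_V(G)`. -/
noncomputable def strongVertexSpan {V : Type*} (G : SimpleGraph V) : ℕ :=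
  sSup {d | ∃ (l : ℕ) (f g : Fin l → V), IsLazyTrack G f ∧ IsLazyTrack G g ∧ mDist G f g = d}

/-- Direct vertex span `σ×_V(G)`. -/
noncomputable def directVertexSpan {V : Type*} (G : SimpleGraph V) : ℕ :=
  sSup {d | ∃ (l : ℕ) (f g : Fin l → V), IsTrack G f ∧ IsTrack G g ∧ mDist G f g = d}

/-- Cartesian vertex span `σ□_V(G)`. -/
noncomputable def cartesianVertexSpan {V : Type*} (G : SimpleGraph V) : ℕ :=
  sSup {d | ∃ (l : ℕ) (f g : Fin l → V),
    IsLazyTrack G f ∧ IsLazyTrack G g ∧ IsOpposite G f g ∧ mDist G f g = d}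

/-- Strong edge span `σ⊠_E(G)`. -/
noncomputable def strongEdgeSpan {V : Type*} (G : SimpleGraph V) : ℕ :=
  sSup {d | ∃ (l : ℕ) (f g : Fin l → V), IsLazySweep G f ∧ IsLazySweep G g ∧ mDist G f g = d}

/-- Direct edge span `σ×_E(G)`. -/
noncomputable def directEdgeSpan {V : Type*} (G : SimpleGraph V) : ℕ :=
  sSup {d | ∃ (l : ℕ) (f g : Fin l → V), IsSweep G f ∧ IsSweep G g ∧ mDist G f g = d}

/-- Cartesian edge span `σ□_E(G)`. -/
noncomputable def cartesianEdgeSpan {V : Type*} (G : SimpleGraph V) : ℕ :=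
  sSup {d | ∃ (l : ℕ) (f g : Fin l → V),
    IsLazySweep G f ∧ IsLazySweep G g ∧ IsOpposite G f g ∧ mDist G f g = d}

/-- `L⊠_V(G)`: minimal length of lazy tracks realizing the strong vertex span. -/
noncomputable def strongVertexL {V : Type*} (G : SimpleGraph V) : ℕ :=
  sInf {l | ∃ f g : Fin l → V,
    IsLazyTrack G f ∧ IsLazyTrack G g ∧ mDist G f g = strongVertexSpan G}

/-- `L×_V(G)`. -/
noncomputable def directVertexL {V : Type*} (G : SimpleGraph V) : ℕ :=
  sInf {l | ∃ f g : Fin l → V,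
    IsTrack G f ∧ IsTrack G g ∧ mDist G f g = directVertexSpan G}

/-- `L□_V(G)`. -/
noncomputable def cartesianVertexL {V : Type*} (G : SimpleGraph V) : ℕ :=
  sInf {l | ∃ f g : Fin l → V,
    IsLazyTrack G f ∧ IsLazyTrack G g ∧ IsOpposite G f g ∧ mDist G f g = cartesianVertexSpan G}

/-- `L⊠_E(G)`. -/
noncomputable def strongEdgeL {V : Type*} (G : SimpleGraph V) : ℕ :=
  sInf {l | ∃ f g : Fin l → V,
    IsLazySweep G f ∧ IsLazySweep G g ∧ mDist G f g = strongEdgeSpan G}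

/-- `L×_E(G)`. -/
noncomputable def directEdgeL {V : Type*} (G : SimpleGraph V) : ℕ :=
  sInf {l | ∃ f g : Fin l → V,
    IsSweep G f ∧ IsSweep G g ∧ mDist G f g = directEdgeSpan G}

/-- `L□_E(G)`. -/
noncomputable def cartesianEdgeL {V : Type*} (G : SimpleGraph V) : ℕ :=
  sInf {l | ∃ f g : Fin l → V,
    IsLazySweep G f ∧ IsLazySweep G g ∧ IsOpposite G f g ∧ mDist G f g = cartesianEdgeSpan G}


namespace Span17

open Fin.CommRing Fin.NatCast

variable {n : ℕ}


/-- circular norm -/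
def cdv {n : ℕ} (x : Fin n) : ℕ := min x.val (n - x.val)

lemma val_one (hn : 3 ≤ n) [NeZero n] : (1 : Fin n).val = 1 := by
  rw [Fin.val_one', Nat.mod_eq_of_lt (by omega)]

lemma eq_one_of_val (hn : 3 ≤ n) [NeZero n] {x : Fin n} (h : x.val = 1) : x = 1 :=
  Fin.ext (by rw [h, val_one hn])

lemma cdv_zero [NeZero n] : cdv (0 : Fin n) = 0 := by
  simp [cdv]

lemma cdv_neg [NeZero n] (x : Fin n) : cdv (-x) = cdv x := by
  have h := Fin.neg_def x
  have hx : x.val < n := x.isLt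
  rcases Nat.eq_zero_or_pos x.val with h0 | h0
  · have : x = 0 := Fin.ext (by simpa using h0)
    rw [this, neg_zero]
  · have hv : (-x).val = n - x.val := by
      rw [Fin.neg_def]
      show (n - x.val) % n = n - x.val
      exact Nat.mod_eq_of_lt (by omega)
    unfold cdv; rw [hv]; omega

lemma cdv_add_one (hn : 3 ≤ n) [NeZero n] (x : Fin n) : cdv (x + 1) ≤ cdv x + 1 := by
  have hv : (x + 1).val = (x.val + 1) % n := by
    rw [Fin.add_def, val_one hn]
  have hx : x.val < n := x.isLt
  rcases Nat.lt_or_ge (x.val + 1) n with h | h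
  · rw [Nat.mod_eq_of_lt h] at hv
    unfold cdv; rw [hv]; omega
  · have : x.val + 1 = n := by omega
    rw [this, Nat.mod_self] at hv
    unfold cdv; rw [hv]; omega

lemma cdv_sub_one (hn : 3 ≤ n) [NeZero n] (x : Fin n) : cdv (x - 1) ≤ cdv x + 1 := by
  have h : x - 1 = -(-x + 1) := by ring
  rw [h, cdv_neg]
  exact le_trans (cdv_add_one hn (-x)) (by rw [cdv_neg])

lemma cycle_connected (hn : 3 ≤ n) : (cycleGraph n).Connected := by
  obtain ⟨m, rfl⟩ : ∃ m, n = m + 1 := ⟨n - 1, by omega⟩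
  exact cycleGraph_connected

lemma adj_iff (hn : 3 ≤ n) [NeZero n] {u v : Fin n} :
    (cycleGraph n).Adj u v ↔ v = u + 1 ∨ u = v + 1 := by
  rw [cycleGraph_adj']
  constructor
  · rintro (h | h)
    · right; have := eq_one_of_val hn h; rw [sub_eq_iff_eq_add] at this; rw [this, add_comm]
    · left; have := eq_one_of_val hn h; rw [sub_eq_iff_eq_add] at this; rw [this, add_comm]
  · rintro (h | h)
    · right; rw [h]; simpa using val_one hn
    · left; rw [h]; simpa using val_one hn

lemma adj_add_one (hn : 3 ≤ n) [NeZero n] (u : Fin n) :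
    (cycleGraph n).Adj u (u + 1) := (adj_iff hn).mpr (Or.inl rfl)

lemma sub_val_of_eq_add_one (hn : 3 ≤ n) [NeZero n] {u v : Fin n} (h : v = u + 1) :
    (v - u).val = 1 := by rw [h]; simpa using val_one hn

lemma dist_le_val (hn : 3 ≤ n) [NeZero n] :
    ∀ (a : ℕ) (u v : Fin n), (v - u).val = a → (cycleGraph n).dist u v ≤ a := by
  intro a
  induction a with
  | zero =>
    intro u v h
    have : v = u := by
      have : v - u = 0 := Fin.ext (by simpa using h)
      exact sub_eq_zero.mp this
    rw [this, SimpleGraph.dist_self]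
  | succ a ih =>
    intro u v h
    have hv1 : (v - (u + 1)).val = a := by
      have e : v - (u + 1) = (v - u) - 1 := by ring
      rw [e, Fin.sub_def, val_one hn, h]
      have hb : a + 1 < n := by rw [← h]; exact (v - u).isLt
      have : n - 1 + (a + 1) = n + a := by omega
      rw [this]
      show (n + a) % n = a
      rw [Nat.add_mod_left, Nat.mod_eq_of_lt (by omega)]
    calc (cycleGraph n).dist u v
        ≤ (cycleGraph n).dist u (u + 1) + (cycleGraph n).dist (u + 1) v :=
          (cycle_connected hn).dist_triangle
      _ ≤ 1 + a := by
          gcongr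
          · exact le_of_eq (SimpleGraph.dist_eq_one_iff_adj.mpr (adj_add_one hn u))
          · exact ih (u + 1) v hv1
      _ = a + 1 := by omega

lemma cdv_le_length (hn : 3 ≤ n) [NeZero n] {u v : Fin n} (p : (cycleGraph n).Walk u v) :
    cdv (v - u) ≤ p.length := by
  induction p with
  | nil => simp [sub_self, cdv_zero]
  | @cons a b c hab q ih =>
    rcases (adj_iff hn).mp hab with h1 | h1
    · have e : c - a = (c - b) + 1 := by rw [h1]; ring
      rw [Walk.length_cons, e]
      exact le_trans (cdv_add_one hn _) (by omega)
    · have e : c - a = (c - b) - 1 := by rw [h1]; ring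
      rw [Walk.length_cons, e]
      exact le_trans (cdv_sub_one hn _) (by omega)

lemma dist_eq_cdv (hn : 3 ≤ n) [NeZero n] (u v : Fin n) :
    (cycleGraph n).dist u v = cdv (v - u) := by
  apply le_antisymm
  · rcases eq_or_ne v u with h | h
    · rw [h, SimpleGraph.dist_self]; omega
    · have h1 : (cycleGraph n).dist u v ≤ (v - u).val := dist_le_val hn _ u v rfl
      have h2 : (cycleGraph n).dist u v ≤ (u - v).val := by
        rw [SimpleGraph.dist_comm]; exact dist_le_val hn _ v u rfl
      have hne : (v - u) ≠ 0 := sub_ne_zero.mpr h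
      have hval : (v - u).val ≠ 0 := fun hc => hne (Fin.ext (by simpa using hc))
      have huv : (u - v).val = n - (v - u).val := by
        have : u - v = -(v - u) := by ring
        rw [this, Fin.neg_def]
        show (n - (v - u).val) % n = n - (v - u).val
        exact Nat.mod_eq_of_lt (by have := (v - u).isLt; omega)
      unfold cdv; omega
  · obtain ⟨p, hp⟩ := ((cycle_connected hn) u v).exists_walk_length_eq_dist
    rw [← hp]; exact cdv_le_length hn p

lemma not_both_large (hn : 3 ≤ n) [NeZero n] {x y : Fin n} (h : y = x + 1 ∨ y = x - 1) :
    min (cdv x) (cdv y) ≤ (n - 1) / 2 := by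
  by_contra hc
  push_neg at hc
  have hx := x.isLt
  have hy := y.isLt
  have hxv : 2 * x.val = n ∧ 2 * y.val = n := by
    unfold cdv at hc; omega
  rcases h with h | h
  · have : y.val = (x.val + 1) % n := by rw [h, Fin.add_def, val_one hn]
    rw [Nat.mod_eq_of_lt (by omega)] at this
    omega
  · have : y.val = (n - 1 + x.val) % n := by rw [h, Fin.sub_def, val_one hn]
    have e : n - 1 + x.val = n + (x.val - 1) := by omega
    rw [e, Nat.add_mod_left, Nat.mod_eq_of_lt (by omega)] at this
    omega

lemma mdist_le (hn : 3 ≤ n) [NeZero n] {l : ℕ} {f g : Fin l → Fin n}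
    (hf : IsLazySweep (cycleGraph n) f) (hg : IsLazySweep (cycleGraph n) g)
    (hop : IsOpposite (cycleGraph n) f g) :
    mDist (cycleGraph n) f g ≤ (n - 1) / 2 := by
  obtain ⟨i, hi, -⟩ := hf.2 s(0, 0 + 1) (adj_add_one hn 0)
  set i0 : Fin l := ⟨i, Nat.lt_of_succ_lt hi⟩ with hi0
  set i1 : Fin l := ⟨i + 1, hi⟩ with hi1
  set x := g i0 - f i0 with hx
  set y := g i1 - f i1 with hy
  have hstep : y = x + 1 ∨ y = x - 1 := by
    by_cases hA : (cycleGraph n).Adj (f i0) (f i1)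
    · have hgeq : g i0 = g i1 := (hop i hi).mp hA
      rcases (adj_iff hn).mp hA with h1 | h1
      · right; rw [hy, hx, hgeq, h1]; ring
      · left; rw [hy, hx, hgeq, h1]; ring
    · have hfeq : f i0 = f i1 := ((hf.1.2 i hi).resolve_left hA)
      have hgne : g i0 ≠ g i1 := fun hEq => hA ((hop i hi).mpr hEq)
      have hgadj : (cycleGraph n).Adj (g i0) (g i1) := (hg.1.2 i hi).resolve_right hgne
      rcases (adj_iff hn).mp hgadj with h1 | h1
      · left; rw [hy, hx, hfeq, h1]; ring
      · right; rw [hy, hx, hfeq, h1]; ring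
  have hkey : min (cdv x) (cdv y) ≤ (n - 1) / 2 := not_both_large hn hstep
  have hdx : (cycleGraph n).dist (f i0) (g i0) = cdv x := dist_eq_cdv hn _ _
  have hdy : (cycleGraph n).dist (f i1) (g i1) = cdv y := dist_eq_cdv hn _ _
  rcases le_total (cdv x) (cdv y) with hle | hle
  · have h1 : mDist (cycleGraph n) f g ≤ cdv x := by
      rw [← hdx]; exact Nat.sInf_le ⟨i0, rfl⟩
    omega
  · have h1 : mDist (cycleGraph n) f g ≤ cdv y := by
      rw [← hdy]; exact Nat.sInf_le ⟨i1, rfl⟩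
    omega

lemma length_lb (hn : 3 ≤ n) [NeZero n] {l : ℕ} {f g : Fin l → Fin n}
    (hf : IsLazySweep (cycleGraph n) f) (hg : IsLazySweep (cycleGraph n) g)
    (hop : IsOpposite (cycleGraph n) f g) : 2 * n + 1 ≤ l := by
  haveI : NeZero n := inferInstance
  have hedge : ∀ k : Fin n, s(k, k + 1) ∈ (cycleGraph n).edgeSet := fun k => adj_add_one hn k
  choose F hF1 hF2 using fun k : Fin n => hf.2 s(k, k + 1) (hedge k)
  choose Gc hG1 hG2 using fun k : Fin n => hg.2 s(k, k + 1) (hedge k)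
  have two_ne : ((1 : Fin n) + 1).val = 2 := by
    rw [Fin.add_def, val_one hn]
    exact Nat.mod_eq_of_lt (by omega)
  have hinj : ∀ {k k' : Fin n}, s(k, k + 1) = s(k', k' + 1) → k = k' := by
    intro k k' h
    rcases Sym2.eq_iff.mp h with ⟨h1, -⟩ | ⟨h1, h2⟩
    · exact h1
    · exfalso
      have : k = k + (1 + 1) := by
        conv_lhs => rw [h1, ← h2]
        ring
      have h20 : (1 + 1 : Fin n) = 0 := left_eq_add.mp this
      rw [h20] at two_ne
      simp at two_ne
  have hfadj : ∀ k : Fin n,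
      (cycleGraph n).Adj (f ⟨F k, Nat.lt_of_succ_lt (hF1 k)⟩) (f ⟨F k + 1, hF1 k⟩) := by
    intro k
    have : s(f ⟨F k, Nat.lt_of_succ_lt (hF1 k)⟩, f ⟨F k + 1, hF1 k⟩) ∈ (cycleGraph n).edgeSet := by
      rw [← hF2 k]; exact hedge k
    exact this
  have hgadj : ∀ k : Fin n,
      (cycleGraph n).Adj (g ⟨Gc k, Nat.lt_of_succ_lt (hG1 k)⟩) (g ⟨Gc k + 1, hG1 k⟩) := by
    intro k
    have : s(g ⟨Gc k, Nat.lt_of_succ_lt (hG1 k)⟩, g ⟨Gc k + 1, hG1 k⟩) ∈ (cycleGraph n).edgeSet := by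
      rw [← hG2 k]; exact hedge k
    exact this
  have hFinj : Function.Injective F := by
    intro k k' h
    apply hinj
    rw [hF2 k, hF2 k']
    have e1 : (⟨F k, Nat.lt_of_succ_lt (hF1 k)⟩ : Fin l) = ⟨F k', Nat.lt_of_succ_lt (hF1 k')⟩ :=
      Fin.ext h
    have e2 : (⟨F k + 1, hF1 k⟩ : Fin l) = ⟨F k' + 1, hF1 k'⟩ := Fin.ext (by simp [h])
    rw [e1, e2]
  have hGinj : Function.Injective Gc := by
    intro k k' h
    apply hinj
    rw [hG2 k, hG2 k']
    have e1 : (⟨Gc k, Nat.lt_of_succ_lt (hG1 k)⟩ : Fin l) = ⟨Gc k', Nat.lt_of_succ_lt (hG1 k')⟩ :=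
      Fin.ext h
    have e2 : (⟨Gc k + 1, hG1 k⟩ : Fin l) = ⟨Gc k' + 1, hG1 k'⟩ := Fin.ext (by simp [h])
    rw [e1, e2]
  have hdisj : ∀ k k' : Fin n, F k ≠ Gc k' := by
    intro k k' hEq
    have hgeq : g ⟨F k, Nat.lt_of_succ_lt (hF1 k)⟩ = g ⟨F k + 1, hF1 k⟩ :=
      (hop (F k) (hF1 k)).mp (hfadj k)
    have e1 : (⟨Gc k', Nat.lt_of_succ_lt (hG1 k')⟩ : Fin l) = ⟨F k, Nat.lt_of_succ_lt (hF1 k)⟩ :=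
      Fin.ext hEq.symm
    have e2 : (⟨Gc k' + 1, hG1 k'⟩ : Fin l) = ⟨F k + 1, hF1 k⟩ := Fin.ext (by simp [hEq])
    have := (hgadj k').ne
    rw [e1, e2] at this
    exact this hgeq
  classical
  have hsub : Finset.image F Finset.univ ∪ Finset.image Gc Finset.univ ⊆ Finset.range (l - 1) := by
    intro a ha
    rcases Finset.mem_union.mp ha with h | h
    · obtain ⟨k, -, rfl⟩ := Finset.mem_image.mp h
      exact Finset.mem_range.mpr (by have := hF1 k; omega)
    · obtain ⟨k, -, rfl⟩ := Finset.mem_image.mp h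
      exact Finset.mem_range.mpr (by have := hG1 k; omega)
  have hdisj2 : Disjoint (Finset.image F Finset.univ) (Finset.image Gc Finset.univ) := by
    rw [Finset.disjoint_left]
    intro a ha hb
    obtain ⟨k, -, rfl⟩ := Finset.mem_image.mp ha
    obtain ⟨k', -, hk'⟩ := Finset.mem_image.mp hb
    exact hdisj k k' hk'.symm
  have hcard := Finset.card_le_card hsub
  rw [Finset.card_union_of_disjoint hdisj2, Finset.card_image_of_injective _ hFinj,
    Finset.card_image_of_injective _ hGinj, Finset.card_range, Finset.card_univ,
    Fintype.card_fin] at hcard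
  have hl1 : 1 ≤ l := by
    have := hF1 ⟨0, by omega⟩; omega
  omega

/-! ### The construction -/

/-- first sweep: 0,1,1,2,2,...,n -/
def cf (n : ℕ) [NeZero n] : Fin (2 * n + 1) → Fin n := fun i => (((i.val + 1) / 2 : ℕ) : Fin n)

/-- second sweep: k,k,k+1,k+1,...,k+n with k = n/2+1 -/
def cg (n : ℕ) [NeZero n] : Fin (2 * n + 1) → Fin n :=
  fun i => ((n / 2 + 1 + i.val / 2 : ℕ) : Fin n)

lemma cast_adj (hn : 3 ≤ n) [NeZero n] (a : ℕ) :
    (cycleGraph n).Adj ((a : ℕ) : Fin n) (((a + 1 : ℕ) : Fin n)) := by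
  apply (adj_iff hn).mpr
  left
  push_cast
  ring

lemma cf_lazy (hn : 3 ≤ n) [NeZero n] : IsLazyTrack (cycleGraph n) (cf n) := by
  constructor
  · intro v
    refine ⟨⟨2 * v.val, by have := v.isLt; omega⟩, ?_⟩
    show (((2 * v.val + 1) / 2 : ℕ) : Fin n) = v
    have : (2 * v.val + 1) / 2 = v.val := by omega
    rw [this, Fin.cast_val_eq_self]
  · intro i hi
    rcases Nat.even_or_odd i with ⟨a, ha⟩ | ⟨a, ha⟩
    · left
      show (cycleGraph n).Adj (((i + 1) / 2 : ℕ) : Fin n) (((i + 1 + 1) / 2 : ℕ) : Fin n)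
      have e1 : (i + 1) / 2 = a := by omega
      have e2 : (i + 1 + 1) / 2 = a + 1 := by omega
      rw [e1, e2]
      exact cast_adj hn a
    · right
      show (((i + 1) / 2 : ℕ) : Fin n) = (((i + 1 + 1) / 2 : ℕ) : Fin n)
      congr 1
      omega

lemma cg_lazy (hn : 3 ≤ n) [NeZero n] : IsLazyTrack (cycleGraph n) (cg n) := by
  constructor
  · intro v
    set a := (v - ((n / 2 + 1 : ℕ) : Fin n)).val with ha
    refine ⟨⟨2 * a, by have := (v - ((n / 2 + 1 : ℕ) : Fin n)).isLt; omega⟩, ?_⟩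
    show ((n / 2 + 1 + 2 * a / 2 : ℕ) : Fin n) = v
    have e : 2 * a / 2 = a := by omega
    rw [e, Nat.cast_add, ha, Fin.cast_val_eq_self]
    ring
  · intro i hi
    rcases Nat.even_or_odd i with ⟨a, ha⟩ | ⟨a, ha⟩
    · right
      show ((n / 2 + 1 + i / 2 : ℕ) : Fin n) = ((n / 2 + 1 + (i + 1) / 2 : ℕ) : Fin n)
      congr 2
      omega
    · left
      show (cycleGraph n).Adj ((n / 2 + 1 + i / 2 : ℕ) : Fin n) ((n / 2 + 1 + (i + 1) / 2 : ℕ) : Fin n)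
      have e : n / 2 + 1 + (i + 1) / 2 = (n / 2 + 1 + i / 2) + 1 := by omega
      rw [e]
      exact cast_adj hn _

lemma cf_sweep (hn : 3 ≤ n) [NeZero n] : SweepCond (cycleGraph n) (cf n) := by
  have key : ∀ u : Fin n, ∃ i : ℕ, ∃ hi : i + 1 < 2 * n + 1,
      u = cf n ⟨i, Nat.lt_of_succ_lt hi⟩ ∧ u + 1 = cf n ⟨i + 1, hi⟩ := by
    intro u
    refine ⟨2 * u.val, by have := u.isLt; omega, ?_, ?_⟩
    · show u = (((2 * u.val + 1) / 2 : ℕ) : Fin n)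
      rw [show (2 * u.val + 1) / 2 = u.val by omega, Fin.cast_val_eq_self]
    · show u + 1 = (((2 * u.val + 1 + 1) / 2 : ℕ) : Fin n)
      rw [show (2 * u.val + 1 + 1) / 2 = u.val + 1 by omega, Nat.cast_add,
        Fin.cast_val_eq_self, Nat.cast_one]
  intro e
  induction e using Sym2.ind with
  | _ u v =>
    intro he
    have he' : (cycleGraph n).Adj u v := he
    rcases (adj_iff hn).mp he' with h1 | h1
    · obtain ⟨i, hi, e1, e2⟩ := key u
      exact ⟨i, hi, by rw [h1, ← e1, ← e2]⟩
    · obtain ⟨i, hi, e1, e2⟩ := key v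
      exact ⟨i, hi, by rw [Sym2.eq_swap, h1, ← e1, ← e2]⟩

lemma cg_sweep (hn : 3 ≤ n) [NeZero n] : SweepCond (cycleGraph n) (cg n) := by
  have key : ∀ u : Fin n, ∃ i : ℕ, ∃ hi : i + 1 < 2 * n + 1,
      u = cg n ⟨i, Nat.lt_of_succ_lt hi⟩ ∧ u + 1 = cg n ⟨i + 1, hi⟩ := by
    intro u
    set a := (u - ((n / 2 + 1 : ℕ) : Fin n)).val with ha
    have halt : a < n := (u - ((n / 2 + 1 : ℕ) : Fin n)).isLt
    refine ⟨2 * a + 1, by omega, ?_, ?_⟩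
    · show u = ((n / 2 + 1 + (2 * a + 1) / 2 : ℕ) : Fin n)
      rw [show (2 * a + 1) / 2 = a by omega, Nat.cast_add, ha, Fin.cast_val_eq_self]
      ring
    · show u + 1 = ((n / 2 + 1 + (2 * a + 1 + 1) / 2 : ℕ) : Fin n)
      rw [show (2 * a + 1 + 1) / 2 = a + 1 by omega, ← Nat.add_assoc, Nat.cast_add,
        Nat.cast_add, ha, Fin.cast_val_eq_self, Nat.cast_one]
      ring
  intro e
  induction e using Sym2.ind with
  | _ u v =>
    intro he
    have he' : (cycleGraph n).Adj u v := he
    rcases (adj_iff hn).mp he' with h1 | h1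
    · obtain ⟨i, hi, e1, e2⟩ := key u
      exact ⟨i, hi, by rw [h1, ← e1, ← e2]⟩
    · obtain ⟨i, hi, e1, e2⟩ := key v
      exact ⟨i, hi, by rw [Sym2.eq_swap, h1, ← e1, ← e2]⟩

lemma c_opp (hn : 3 ≤ n) [NeZero n] : IsOpposite (cycleGraph n) (cf n) (cg n) := by
  intro i hi
  rcases Nat.even_or_odd i with ⟨a, ha⟩ | ⟨a, ha⟩
  · apply iff_of_true
    · show (cycleGraph n).Adj (((i + 1) / 2 : ℕ) : Fin n) (((i + 1 + 1) / 2 : ℕ) : Fin n)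
      rw [show (i + 1) / 2 = a by omega, show (i + 1 + 1) / 2 = a + 1 by omega]
      exact cast_adj hn a
    · show ((n / 2 + 1 + i / 2 : ℕ) : Fin n) = ((n / 2 + 1 + (i + 1) / 2 : ℕ) : Fin n)
      congr 2
      omega
  · apply iff_of_false
    · show ¬(cycleGraph n).Adj (((i + 1) / 2 : ℕ) : Fin n) (((i + 1 + 1) / 2 : ℕ) : Fin n)
      rw [show (i + 1 + 1) / 2 = (i + 1) / 2 by omega]
      exact (cycleGraph n).irrefl
    · show ¬((n / 2 + 1 + i / 2 : ℕ) : Fin n) = ((n / 2 + 1 + (i + 1) / 2 : ℕ) : Fin n)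
      rw [show n / 2 + 1 + (i + 1) / 2 = n / 2 + 1 + i / 2 + 1 by omega]
      intro hEq
      have h0 : ((n / 2 + 1 + i / 2 + 1 : ℕ) : Fin n) - ((n / 2 + 1 + i / 2 : ℕ) : Fin n) = 0 := by
        rw [← hEq]; exact sub_self _
      have h1 : ((n / 2 + 1 + i / 2 + 1 : ℕ) : Fin n) - ((n / 2 + 1 + i / 2 : ℕ) : Fin n) = 1 := by
        push_cast; ring
      rw [h1] at h0
      have hv := val_one (n := n) hn
      rw [h0] at hv
      simp at hv

lemma c_dist (hn : 3 ≤ n) [NeZero n] (i : Fin (2 * n + 1)) :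
    (cycleGraph n).dist (cf n i) (cg n i) =
      min (n / 2 + 1 + i.val / 2 - (i.val + 1) / 2)
        (n - (n / 2 + 1 + i.val / 2 - (i.val + 1) / 2)) := by
  set D := n / 2 + 1 + i.val / 2 - (i.val + 1) / 2 with hD
  have hle : (i.val + 1) / 2 ≤ n / 2 + 1 + i.val / 2 := by omega
  have hsub : cg n i - cf n i = ((D : ℕ) : Fin n) := by
    show ((n / 2 + 1 + i.val / 2 : ℕ) : Fin n) - (((i.val + 1) / 2 : ℕ) : Fin n) = _
    rw [← Nat.cast_sub hle]
  have hDlt : D < n := by omega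
  rw [dist_eq_cdv hn, hsub]
  unfold cdv
  rw [Fin.val_natCast, Nat.mod_eq_of_lt hDlt]

lemma c_mdist (hn : 3 ≤ n) [NeZero n] :
    mDist (cycleGraph n) (cf n) (cg n) = (n - 1) / 2 := by
  apply le_antisymm
  · apply Nat.sInf_le
    refine ⟨0, ?_⟩
    rw [c_dist hn]
    have h0 : (0 : Fin (2 * n + 1)).val = 0 := rfl
    rw [h0]
    omega
  · refine le_csInf ⟨(cycleGraph n).dist (cf n 0) (cg n 0), ⟨0, rfl⟩⟩ ?_
    rintro d ⟨i, rfl⟩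
    rw [c_dist hn]
    have := i.isLt
    omega

lemma span_eq (hn : 3 ≤ n) [NeZero n] :
    cartesianEdgeSpan (cycleGraph n) = (n - 1) / 2 := by
  have hmem : (n - 1) / 2 ∈ {d | ∃ (l : ℕ) (f g : Fin l → Fin n),
      IsLazySweep (cycleGraph n) f ∧ IsLazySweep (cycleGraph n) g ∧
      IsOpposite (cycleGraph n) f g ∧ mDist (cycleGraph n) f g = d} :=
    ⟨2 * n + 1, cf n, cg n, ⟨cf_lazy hn, cf_sweep hn⟩, ⟨cg_lazy hn, cg_sweep hn⟩,
      c_opp hn, c_mdist hn⟩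
  have hub : ∀ d ∈ {d | ∃ (l : ℕ) (f g : Fin l → Fin n),
      IsLazySweep (cycleGraph n) f ∧ IsLazySweep (cycleGraph n) g ∧
      IsOpposite (cycleGraph n) f g ∧ mDist (cycleGraph n) f g = d}, d ≤ (n - 1) / 2 := by
    rintro d ⟨l, f, g, hf, hg, hop, rfl⟩
    exact mdist_le hn hf hg hop
  exact le_antisymm (csSup_le ⟨_, hmem⟩ hub) (le_csSup ⟨(n - 1) / 2, hub⟩ hmem)

end Span17

theorem stmt17 (n : ℕ) (hn : 3 ≤ n) :
    cartesianEdgeL (SimpleGraph.cycleGraph n) = 2 * n + 1 := by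
  haveI : NeZero n := ⟨by omega⟩
  have hmem : 2 * n + 1 ∈ {l | ∃ f g : Fin l → Fin n,
      IsLazySweep (cycleGraph n) f ∧ IsLazySweep (cycleGraph n) g ∧
      IsOpposite (cycleGraph n) f g ∧
      mDist (cycleGraph n) f g = cartesianEdgeSpan (cycleGraph n)} :=
    ⟨Span17.cf n, Span17.cg n, ⟨Span17.cf_lazy hn, Span17.cf_sweep hn⟩,
      ⟨Span17.cg_lazy hn, Span17.cg_sweep hn⟩, Span17.c_opp hn,
      by rw [Span17.span_eq hn]; exact Span17.c_mdist hn⟩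
  apply le_antisymm
  · exact Nat.sInf_le hmem
  · refine le_csInf ⟨_, hmem⟩ ?_
    rintro l ⟨f, g, hf, hg, hop, -⟩
    exact Span17.length_lb hn hf hg hop
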